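/- Fix an integer s ≥ 0. Let (P_N)_{N≥1} be a moderate sequence of Laurent polynomials over ℂ (indexed by a single positive integer N), and suppose that for each N there is a Laurent polynomial Q_N over ℂ with P_N(A) = (A^{2N} − A^{−2N})^s · Q_N(A). Then there exist constants C', m' > 0 such that |Q_N(e^{iπ/2N})| ≤ C' N^{m'} for all N ≥ 1. (This is the paper's l'Hôpital argument: even though the normalizing factor (A^{2N} − A^{−2N})^s vanishes at A = e^{iπ/2N}, the normalized values still grow at most polynomially in N.) -/

import Mathlib

open LaurentPolynomial

/-- A sequence of Laurent polynomials over `ℂ`, indexed by a single positive integer, is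
*moderate* if there are constants `C, m > 0` such that for every `N` the absolute values
of the maximal degree, the minimal degree (i.e. of every exponent carrying a nonzero
coefficient) and of all coefficients are less than `C·N^m`. -/
def Moderate (P : ℕ+ → LaurentPolynomial ℂ) : Prop :=
  ∃ C m : ℝ, 0 < C ∧ 0 < m ∧ ∀ N : ℕ+,
    (∀ j : ℤ, (P N).coeff j ≠ 0 → |(j : ℝ)| < C * ((N : ℕ) : ℝ) ^ m) ∧
    (∀ j : ℤ, ‖(P N).coeff j‖ < C * ((N : ℕ) : ℝ) ^ m)

/-- Evaluation of a Laurent polynomial `∑_j a_j A^j` at a nonzero complex number. -/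
noncomputable def evalL (p : LaurentPolynomial ℂ) (z : ℂ) : ℂ :=
  ∑ j ∈ p.coeff.support, p.coeff j * z ^ j

namespace ModerateAux

/-- Coefficient formula for multiplication by `T n - T (-n)`. -/
lemma coeff_factor_mul (n : ℤ) (R : LaurentPolynomial ℂ) (k : ℤ) :
    ((((T n - T (-n)) * R : LaurentPolynomial ℂ)).coeff k) = R.coeff (k - n) - R.coeff (k + n) := by
  have h1 := AddMonoidAlgebra.coeff_single_mul_apply R (1 : ℂ) n k
  have h2 := AddMonoidAlgebra.coeff_single_mul_apply R (1 : ℂ) (-n) k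
  rw [one_mul] at h1 h2
  have e1 : ((T n : LaurentPolynomial ℂ) * R).coeff k = R.coeff (k - n) := by
    rw [show (T n : LaurentPolynomial ℂ) = AddMonoidAlgebra.single n (1 : ℂ) from rfl, h1,
      neg_add_eq_sub]
  have e2 : ((T (-n) : LaurentPolynomial ℂ) * R).coeff k = R.coeff (k + n) := by
    rw [show (T (-n) : LaurentPolynomial ℂ) = AddMonoidAlgebra.single (-n) (1 : ℂ) from rfl, h2,
      neg_neg, add_comm]
  rw [sub_mul, AddMonoidAlgebra.coeff_sub, Finsupp.sub_apply, e1, e2]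

lemma exists_upper (R : LaurentPolynomial ℂ) : ∃ K : ℤ, ∀ j : ℤ, K ≤ j → R.coeff j = 0 := by
  obtain ⟨K, hK⟩ := R.coeff.support.exists_le
  refine ⟨K + 1, fun j hj => ?_⟩
  by_contra h
  have := hK j (Finsupp.mem_support_iff.2 h)
  omega

lemma exists_lower (R : LaurentPolynomial ℂ) : ∃ K : ℤ, ∀ j : ℤ, j ≤ K → R.coeff j = 0 := by
  obtain ⟨K, hK⟩ := (R.coeff.support.image (fun x : ℤ => -x)).exists_le
  refine ⟨-K - 1, fun j hj => ?_⟩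
  by_contra h
  have := hK (-j) (Finset.mem_image.2 ⟨j, Finsupp.mem_support_iff.2 h, rfl⟩)
  omega

lemma tele_up (n : ℤ) (P R : LaurentPolynomial ℂ)
    (h : ∀ k, P.coeff k = R.coeff (k - n) - R.coeff (k + n)) :
    ∀ (t : ℕ) (k : ℤ),
      R.coeff k = (∑ i ∈ Finset.range t, P.coeff (k + n + 2 * n * i)) + R.coeff (k + 2 * n * t) := by
  intro t
  induction t with
  | zero => intro k; simp
  | succ t ih =>
    intro k
    have h1 : R.coeff k = P.coeff (k + n) + R.coeff (k + 2 * n) := by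
      have h2 := h (k + n)
      rw [show k + n - n = k by ring, show k + n + n = k + 2 * n by ring] at h2
      rw [h2]; ring
    have e' : (∑ i ∈ Finset.range (t + 1), P.coeff (k + n + 2 * n * (i : ℤ)))
        = (∑ i ∈ Finset.range t, P.coeff (k + 2 * n + n + 2 * n * (i : ℤ))) + P.coeff (k + n) := by
      rw [Finset.sum_range_succ']
      congr 1
      · refine Finset.sum_congr rfl fun i _ => ?_
        congr 1
        push_cast
        ring
      · congr 1
        push_cast
        ring
    have er : k + 2 * n * ((t + 1 : ℕ) : ℤ) = k + 2 * n + 2 * n * (t : ℤ) := by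
      push_cast
      ring
    rw [e', er, h1, ih (k + 2 * n)]
    ring

lemma tele_down (n : ℤ) (P R : LaurentPolynomial ℂ)
    (h : ∀ k, P.coeff k = R.coeff (k - n) - R.coeff (k + n)) :
    ∀ (t : ℕ) (k : ℤ),
      R.coeff k = R.coeff (k - 2 * n * t) - ∑ i ∈ Finset.range t, P.coeff (k - n - 2 * n * i) := by
  intro t
  induction t with
  | zero => intro k; simp
  | succ t ih =>
    intro k
    have h1 : R.coeff k = R.coeff (k - 2 * n) - P.coeff (k - n) := by
      have h2 := h (k - n)
      rw [show k - n - n = k - 2 * n by ring, show k - n + n = k by ring] at h2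
      rw [h2]; ring
    have e' : (∑ i ∈ Finset.range (t + 1), P.coeff (k - n - 2 * n * (i : ℤ)))
        = (∑ i ∈ Finset.range t, P.coeff (k - 2 * n - n - 2 * n * (i : ℤ))) + P.coeff (k - n) := by
      rw [Finset.sum_range_succ']
      congr 1
      · refine Finset.sum_congr rfl fun i _ => ?_
        congr 1
        push_cast
        ring
      · congr 1
        push_cast
        ring
    have er : k - 2 * n * ((t + 1 : ℕ) : ℤ) = k - 2 * n - 2 * n * (t : ℤ) := by
      push_cast
      ring
    rw [e', er, h1, ih (k - 2 * n)]
    ring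

/-- Representation of coefficients of `R` via coefficients of `P`, from above. -/
lemma repr_up (n : ℤ) (hn : 1 ≤ n) (P R : LaurentPolynomial ℂ)
    (h : ∀ k, P.coeff k = R.coeff (k - n) - R.coeff (k + n)) (k : ℤ) :
    ∃ t : ℕ, R.coeff k = ∑ i ∈ Finset.range t, P.coeff (k + n + 2 * n * i) := by
  obtain ⟨K, hK⟩ := exists_upper R
  refine ⟨(K - k).toNat, ?_⟩
  have h1 := tele_up n P R h (K - k).toNat k
  have h2 : R.coeff (k + 2 * n * (K - k).toNat) = 0 := by
    apply hK
    have h3 : (K - k : ℤ) ≤ ((K - k).toNat : ℤ) := Int.self_le_toNat _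
    have h5 : (0 : ℤ) ≤ (2 * n - 1) * ((K - k).toNat : ℤ) :=
      mul_nonneg (by linarith) (Int.natCast_nonneg _)
    linarith
  rw [h1, h2, add_zero]

/-- Representation of coefficients of `R` via coefficients of `P`, from below. -/
lemma repr_down (n : ℤ) (hn : 1 ≤ n) (P R : LaurentPolynomial ℂ)
    (h : ∀ k, P.coeff k = R.coeff (k - n) - R.coeff (k + n)) (k : ℤ) :
    ∃ t : ℕ, R.coeff k = -∑ i ∈ Finset.range t, P.coeff (k - n - 2 * n * i) := by
  obtain ⟨K, hK⟩ := exists_lower R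
  refine ⟨(k - K).toNat, ?_⟩
  have h1 := tele_down n P R h (k - K).toNat k
  have h2 : R.coeff (k - 2 * n * (k - K).toNat) = 0 := by
    apply hK
    have h3 : (k - K : ℤ) ≤ ((k - K).toNat : ℤ) := Int.self_le_toNat _
    have h5 : (0 : ℤ) ≤ (2 * n - 1) * ((k - K).toNat : ℤ) :=
      mul_nonneg (by linarith) (Int.natCast_nonneg _)
    linarith
  rw [h1, h2, zero_sub]

lemma card_support_le (P : LaurentPolynomial ℂ) (B : ℝ) (hB : 0 ≤ B)
    (hsupp : ∀ j : ℤ, P.coeff j ≠ 0 → |(j : ℝ)| ≤ B) :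
    (P.coeff.support.card : ℝ) ≤ 2 * B + 3 := by
  have hsub : P.coeff.support ⊆ Finset.Icc (-⌈B⌉) ⌈B⌉ := by
    intro j hj
    have hj' := hsupp j (Finsupp.mem_support_iff.1 hj)
    rw [abs_le] at hj'
    have hc : B ≤ (⌈B⌉ : ℝ) := Int.le_ceil B
    rw [Finset.mem_Icc]
    constructor
    · have : -((⌈B⌉ : ℝ)) ≤ (j : ℝ) := by linarith [hj'.1]
      exact_mod_cast this
    · have : (j : ℝ) ≤ (⌈B⌉ : ℝ) := by linarith [hj'.2]
      exact_mod_cast this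
  have hcard : P.coeff.support.card ≤ (Finset.Icc (-⌈B⌉) ⌈B⌉).card := Finset.card_le_card hsub
  have hBc : (0 : ℤ) ≤ ⌈B⌉ := Int.ceil_nonneg hB
  have hIcc : ((Finset.Icc (-⌈B⌉) ⌈B⌉).card : ℤ) = 2 * ⌈B⌉ + 1 := by
    rw [Int.card_Icc]
    omega
  have hceil : (⌈B⌉ : ℝ) < B + 1 := Int.ceil_lt_add_one B
  have h2 : ((Finset.Icc (-⌈B⌉) ⌈B⌉).card : ℝ) = 2 * (⌈B⌉ : ℝ) + 1 := by
    exact_mod_cast congrArg (fun x : ℤ => (x : ℝ)) hIcc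
  calc (P.coeff.support.card : ℝ) ≤ ((Finset.Icc (-⌈B⌉) ⌈B⌉).card : ℝ) := by exact_mod_cast hcard
    _ = 2 * (⌈B⌉ : ℝ) + 1 := h2
    _ ≤ 2 * B + 3 := by linarith

lemma sum_abs_le (P : LaurentPolynomial ℂ) (B M : ℝ) (hB : 0 ≤ B) (hM : 0 ≤ M)
    (hsupp : ∀ j : ℤ, P.coeff j ≠ 0 → |(j : ℝ)| ≤ B)
    (hcoef : ∀ j : ℤ, ‖P.coeff j‖ ≤ M) :
    ∑ j ∈ P.coeff.support, ‖P.coeff j‖ ≤ (2 * B + 3) * M := by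
  have h1 : ∑ j ∈ P.coeff.support, ‖P.coeff j‖ ≤ P.coeff.support.card • M :=
    Finset.sum_le_card_nsmul _ _ M (fun j _ => hcoef j)
  rw [nsmul_eq_mul] at h1
  calc ∑ j ∈ P.coeff.support, ‖P.coeff j‖ ≤ (P.coeff.support.card : ℝ) * M := h1
    _ ≤ (2 * B + 3) * M :=
        mul_le_mul_of_nonneg_right (card_support_le P B hB hsupp) hM

/-- One division step: bounds on `P = (T n - T (-n)) * R` give bounds on `R`. -/
lemma step_lemma (n : ℤ) (hn : 1 ≤ n) (P R : LaurentPolynomial ℂ)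
    (hfac : P = ((T n : LaurentPolynomial ℂ) - T (-n)) * R) (B M : ℝ) (hB : 0 ≤ B) (hM : 0 ≤ M)
    (hsupp : ∀ j : ℤ, P.coeff j ≠ 0 → |(j : ℝ)| ≤ B)
    (hcoef : ∀ j : ℤ, ‖P.coeff j‖ ≤ M) :
    (∀ j : ℤ, R.coeff j ≠ 0 → |(j : ℝ)| ≤ B) ∧
      (∀ j : ℤ, ‖R.coeff j‖ ≤ (2 * B + 3) * M) := by
  have h : ∀ k, P.coeff k = R.coeff (k - n) - R.coeff (k + n) := by
    intro k
    rw [hfac, coeff_factor_mul]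
  constructor
  · intro k hk
    obtain ⟨t, ht⟩ := repr_up n hn P R h k
    obtain ⟨t', ht'⟩ := repr_down n hn P R h k
    have hub : (k : ℝ) ≤ B := by
      rw [ht] at hk
      obtain ⟨i, _, hi⟩ := Finset.exists_ne_zero_of_sum_ne_zero hk
      have hbd := hsupp _ hi
      rw [abs_le] at hbd
      have h1 : ((k + n + 2 * n * (i : ℤ) : ℤ) : ℝ) ≤ B := by exact_mod_cast hbd.2
      push_cast at h1
      have h2 : (1 : ℝ) ≤ (n : ℝ) := by exact_mod_cast hn
      have h3 : (0 : ℝ) ≤ ((i : ℕ) : ℝ) := Nat.cast_nonneg i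
      nlinarith
    have hlb : -B ≤ (k : ℝ) := by
      rw [ht'] at hk
      have hk2 : ∑ i ∈ Finset.range t', P.coeff (k - n - 2 * n * i) ≠ 0 := fun hz => hk (by rw [hz, neg_zero])
      obtain ⟨i, _, hi⟩ := Finset.exists_ne_zero_of_sum_ne_zero hk2
      have hbd := hsupp _ hi
      rw [abs_le] at hbd
      have h1 : -B ≤ ((k - n - 2 * n * (i : ℤ) : ℤ) : ℝ) := by exact_mod_cast hbd.1
      push_cast at h1
      have h2 : (1 : ℝ) ≤ (n : ℝ) := by exact_mod_cast hn
      have h3 : (0 : ℝ) ≤ ((i : ℕ) : ℝ) := Nat.cast_nonneg i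
      nlinarith
    rw [abs_le]
    exact ⟨hlb, hub⟩
  · intro k
    obtain ⟨t, ht⟩ := repr_up n hn P R h k
    classical
    set S := (Finset.range t).filter (fun i : ℕ => P.coeff (k + n + 2 * n * (i : ℤ)) ≠ 0) with hS
    have e : ∑ i ∈ Finset.range t, ‖P.coeff (k + n + 2 * n * (i : ℤ))‖
        = ∑ i ∈ S, ‖P.coeff (k + n + 2 * n * (i : ℤ))‖ :=
      (Finset.sum_filter_of_ne (s := Finset.range t)
        (f := fun i : ℕ => ‖P.coeff (k + n + 2 * n * (i : ℤ))‖)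
        (p := fun i : ℕ => P.coeff (k + n + 2 * n * (i : ℤ)) ≠ 0)
        (fun i _ hne hz => hne (by show ‖P.coeff (k + n + 2 * n * (i : ℤ))‖ = 0; rw [hz, norm_zero]))).symm
    have hcard : S.card ≤ P.coeff.support.card := by
      apply Finset.card_le_card_of_injOn (fun i : ℕ => k + n + 2 * n * (i : ℤ))
      · intro i hi
        exact Finsupp.mem_support_iff.2 ((Finset.mem_filter.1 hi).2)
      · intro a _ b _ hab
        simp only at hab
        have h' : 2 * n * (a : ℤ) = 2 * n * (b : ℤ) := by linarith
        have h2n : (2 * n : ℤ) ≠ 0 := by omega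
        exact_mod_cast mul_left_cancel₀ h2n h'
    have hbound : ∑ i ∈ Finset.range t, ‖P.coeff (k + n + 2 * n * (i : ℤ))‖
        ≤ (2 * B + 3) * M := by
      rw [e]
      calc ∑ i ∈ S, ‖P.coeff (k + n + 2 * n * (i : ℤ))‖ ≤ S.card • M :=
            Finset.sum_le_card_nsmul _ _ M (fun i _ => hcoef _)
        _ = (S.card : ℝ) * M := nsmul_eq_mul _ _
        _ ≤ (P.coeff.support.card : ℝ) * M := by
            apply mul_le_mul_of_nonneg_right _ hM
            exact_mod_cast hcard
        _ ≤ (2 * B + 3) * M :=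
            mul_le_mul_of_nonneg_right (card_support_le P B hB hsupp) hM
    rw [ht]
    exact le_trans (norm_sum_le _ _) hbound

/-- Iterated division: bounds on `P = (T n - T (-n))^s * Q` give bounds on `Q`. -/
lemma iter_lemma (n : ℤ) (hn : 1 ≤ n) (s : ℕ) :
    ∀ (P Q : LaurentPolynomial ℂ) (B M : ℝ), 0 ≤ B → 0 ≤ M →
    P = ((T n : LaurentPolynomial ℂ) - T (-n)) ^ s * Q →
    (∀ j : ℤ, P.coeff j ≠ 0 → |(j : ℝ)| ≤ B) →
    (∀ j : ℤ, ‖P.coeff j‖ ≤ M) →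
    (∀ j : ℤ, Q.coeff j ≠ 0 → |(j : ℝ)| ≤ B) ∧
      (∀ j : ℤ, ‖Q.coeff j‖ ≤ (2 * B + 3) ^ s * M) := by
  induction s with
  | zero =>
    intro P Q B M hB hM hfac h1 h2
    rw [pow_zero, one_mul] at hfac
    subst hfac
    exact ⟨h1, fun j => by simpa using h2 j⟩
  | succ s ih =>
    intro P Q B M hB hM hfac h1 h2
    have hfac' : P = ((T n : LaurentPolynomial ℂ) - T (-n)) *
        (((T n : LaurentPolynomial ℂ) - T (-n)) ^ s * Q) := by
      rw [hfac, pow_succ]; ring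
    obtain ⟨r1, r2⟩ := step_lemma n hn P _ hfac' B M hB hM h1 h2
    have hM' : (0 : ℝ) ≤ (2 * B + 3) * M := by positivity
    obtain ⟨q1, q2⟩ := ih _ Q B ((2 * B + 3) * M) hB hM' rfl r1 r2
    refine ⟨q1, fun j => (q2 j).trans (le_of_eq ?_)⟩
    rw [pow_succ]; ring

end ModerateAux

/-- If `(P_N)` is a moderate sequence of Laurent polynomials and
`P_N = (A^{2N} - A^{-2N})^s · Q_N` for Laurent polynomials `Q_N`, then the values
`|Q_N(e^{iπ/2N})|` grow at most polynomially in `N`. -/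
theorem moderate_quotient_polynomial_growth
    (s : ℕ) (P Q : ℕ+ → LaurentPolynomial ℂ) (hP : Moderate P)
    (hQ : ∀ N : ℕ+,
      P N = ((T (2 * ((N : ℕ) : ℤ)) : LaurentPolynomial ℂ) - T (-(2 * ((N : ℕ) : ℤ)))) ^ s * Q N) :
    ∃ C' m' : ℝ, 0 < C' ∧ 0 < m' ∧ ∀ N : ℕ+,
      ‖evalL (Q N) (Complex.exp (Real.pi * Complex.I / (2 * ((N : ℕ) : ℂ))))‖ ≤
        C' * ((N : ℕ) : ℝ) ^ m' := by
  obtain ⟨C, m, hC, hm, hbound⟩ := hP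
  set C₁ : ℝ := max C 1 with hC₁def
  have hC₁ : 1 ≤ C₁ := le_max_right _ _
  have hC₁pos : 0 < C₁ := lt_of_lt_of_le one_pos hC₁
  refine ⟨5 ^ (s + 1) * C₁ ^ (s + 2), m * ((s : ℝ) + 2), by positivity, by positivity, ?_⟩
  intro N
  set z : ℂ := Complex.exp (Real.pi * Complex.I / (2 * ((N : ℕ) : ℂ))) with hz
  set X : ℝ := ((N : ℕ) : ℝ) ^ m with hX
  have hN1 : (1 : ℝ) ≤ ((N : ℕ) : ℝ) := by exact_mod_cast N.one_le
  have hX1 : (1 : ℝ) ≤ X := Real.one_le_rpow hN1 hm.le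
  have hXpos : (0 : ℝ) < X := lt_of_lt_of_le one_pos hX1
  set B : ℝ := C * X with hB
  have hBpos : 0 < B := by positivity
  have hn : (1 : ℤ) ≤ 2 * ((N : ℕ) : ℤ) := by
    have : (1 : ℤ) ≤ ((N : ℕ) : ℤ) := by exact_mod_cast N.one_le
    omega
  obtain ⟨h1, h2⟩ := hbound N
  obtain ⟨q1, q2⟩ := ModerateAux.iter_lemma (2 * ((N : ℕ) : ℤ)) hn s (P N) (Q N) B B
    hBpos.le hBpos.le (hQ N) (fun j hj => (h1 j hj).le) (fun j => (h2 j).le)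
  have hzabs : ‖z‖ = 1 := by
    have hzeq : (↑Real.pi * Complex.I / (2 * ((N : ℕ) : ℂ)))
        = ((Real.pi / (2 * ((N : ℕ) : ℝ))) : ℝ) * Complex.I := by
      push_cast
      ring
    rw [hz, hzeq, Complex.norm_exp_ofReal_mul_I]
  have heval : ‖evalL (Q N) z‖ ≤ (2 * B + 3) * ((2 * B + 3) ^ s * B) := by
    have hsum : ‖evalL (Q N) z‖ ≤ ∑ j ∈ (Q N).coeff.support, ‖(Q N).coeff j‖ := by
      unfold evalL
      calc ‖∑ j ∈ (Q N).coeff.support, (Q N).coeff j * z ^ j‖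
          ≤ ∑ j ∈ (Q N).coeff.support, ‖(Q N).coeff j * z ^ j‖ := norm_sum_le _ _
        _ = ∑ j ∈ (Q N).coeff.support, ‖(Q N).coeff j‖ := by
            apply Finset.sum_congr rfl
            intro j _
            rw [norm_mul, norm_zpow, hzabs, one_zpow, mul_one]
    calc ‖evalL (Q N) z‖
        ≤ ∑ j ∈ (Q N).coeff.support, ‖(Q N).coeff j‖ := hsum
      _ ≤ (2 * B + 3) * ((2 * B + 3) ^ s * B) :=
          ModerateAux.sum_abs_le (Q N) B ((2 * B + 3) ^ s * B) hBpos.le (by positivity) q1 q2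
  have hBle : B ≤ C₁ * X := mul_le_mul_of_nonneg_right (le_max_left _ _) hXpos.le
  have hfive : 2 * B + 3 ≤ 5 * (C₁ * X) := by
    have h3 : (3 : ℝ) ≤ 3 * (C₁ * X) := by nlinarith
    linarith
  have hfive0 : (0 : ℝ) ≤ 2 * B + 3 := by positivity
  have hfinal : (2 * B + 3) * ((2 * B + 3) ^ s * B)
      ≤ (5 * (C₁ * X)) ^ (s + 1) * (C₁ * X) := by
    have hp : (2 * B + 3) ^ (s + 1) ≤ (5 * (C₁ * X)) ^ (s + 1) :=
      pow_le_pow_left₀ hfive0 hfive (s + 1)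
    calc (2 * B + 3) * ((2 * B + 3) ^ s * B) = (2 * B + 3) ^ (s + 1) * B := by ring
      _ ≤ (5 * (C₁ * X)) ^ (s + 1) * (C₁ * X) :=
          mul_le_mul hp hBle hBpos.le (by positivity)
  have hXpow : X ^ (s + 2) = ((N : ℕ) : ℝ) ^ (m * ((s : ℝ) + 2)) := by
    rw [hX, ← Real.rpow_natCast (((N : ℕ) : ℝ) ^ m) (s + 2), ← Real.rpow_mul (by positivity)]
    norm_num
  calc ‖evalL (Q N) z‖
      ≤ (2 * B + 3) * ((2 * B + 3) ^ s * B) := heval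
    _ ≤ (5 * (C₁ * X)) ^ (s + 1) * (C₁ * X) := hfinal
    _ = 5 ^ (s + 1) * C₁ ^ (s + 2) * X ^ (s + 2) := by ring
    _ = 5 ^ (s + 1) * C₁ ^ (s + 2) * ((N : ℕ) : ℝ) ^ (m * ((s : ℝ) + 2)) := by rw [hXpow]
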